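/- Let R be a commutative ring, M a projective R-module, N an R-module, and {N_i} a set of R-submodules of N. Then inside N ⊗_R M, the image of (∩_i N_i) ⊗_R M equals the intersection of the images of the maps N_i ⊗_R M → N ⊗_R M. -/

import Mathlib

open scoped TensorProduct

section Aux

variable {R M N : Type*} [CommRing R] [AddCommGroup M] [Module R M]
  [AddCommGroup N] [Module R N]

/-- Naturality: tensoring the inclusion `N' ⊆ N` with a map `φ : M → M₂`. -/
private lemma aux_nat {M₂ : Type*} [AddCommGroup M₂] [Module R M₂] (N' : Submodule R N)
    (φ : M →ₗ[R] M₂) (y : N' ⊗[R] M) :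
    φ.lTensor N (TensorProduct.map N'.subtype LinearMap.id y)
      = TensorProduct.map N'.subtype LinearMap.id (φ.lTensor N' y) := by
  induction y using TensorProduct.induction_on with
  | zero => simp
  | tmul n m => simp
  | add a b ha hb => simp [ha, hb]

/-- Componentwise formula for the image of `N' ⊗ (κ →₀ R)` under `finsuppScalarRight`. -/
private lemma aux_comp (N' : Submodule R N) {κ : Type*} [DecidableEq κ] (y : N' ⊗[R] (κ →₀ R)) (j : κ) :
    TensorProduct.finsuppScalarRight R R N κ (TensorProduct.map N'.subtype LinearMap.id y) j
      = (TensorProduct.finsuppScalarRight R R N' κ y j : N) := by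
  induction y using TensorProduct.induction_on with
  | zero => simp
  | tmul n f => simp
  | add a b ha hb => simp [ha, hb]

/-- The free case: membership in the image of `N' ⊗ (κ →₀ R)` is a componentwise condition. -/
private lemma aux_free (N' : Submodule R N) {κ : Type*} [DecidableEq κ] (x : N ⊗[R] (κ →₀ R)) :
    x ∈ LinearMap.range
        (TensorProduct.map N'.subtype (LinearMap.id : (κ →₀ R) →ₗ[R] (κ →₀ R)))
      ↔ ∀ j, TensorProduct.finsuppScalarRight R R N κ x j ∈ N' := by
  constructor
  · rintro ⟨y, rfl⟩ j
    rw [aux_comp]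
    exact (TensorProduct.finsuppScalarRight R R N' κ y j).2
  · intro h
    refine ⟨(TensorProduct.finsuppScalarRight R R N' κ).symm
      (Finsupp.mk (TensorProduct.finsuppScalarRight R R N κ x).support
        (fun j => ⟨TensorProduct.finsuppScalarRight R R N κ x j, h j⟩) ?_), ?_⟩
    · intro j
      simp [Finsupp.mem_support_iff, Subtype.ext_iff]
    · apply (TensorProduct.finsuppScalarRight R R N κ).injective
      ext j
      rw [aux_comp, LinearEquiv.apply_symm_apply]
      rfl

/-- Transfer along a projectivity splitting. -/
private lemma aux_transfer (N' : Submodule R N) (s : M →ₗ[R] (M →₀ R))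
    (hs : Function.LeftInverse (Finsupp.linearCombination R id) s) [DecidableEq M] (x : N ⊗[R] M) :
    x ∈ LinearMap.range (TensorProduct.map N'.subtype (LinearMap.id : M →ₗ[R] M)) ↔
      s.lTensor N x ∈ LinearMap.range
        (TensorProduct.map N'.subtype (LinearMap.id : (M →₀ R) →ₗ[R] (M →₀ R))) := by
  constructor
  · rintro ⟨y, rfl⟩
    exact ⟨s.lTensor N' y, (aux_nat N' s y).symm⟩
  · rintro ⟨y, hy⟩
    refine ⟨(Finsupp.linearCombination R id).lTensor N' y, ?_⟩
    rw [← aux_nat, hy, ← LinearMap.comp_apply, ← LinearMap.lTensor_comp]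
    have h2 : Finsupp.linearCombination R (id : M → M) ∘ₗ s = LinearMap.id := by
      ext m; exact hs m
    rw [h2, LinearMap.lTensor_id, LinearMap.id_apply]

end Aux

/-- Let `R` be a commutative ring, `M` a projective `R`-module, `N` an
`R`-module, and `{N_i}` a set of `R`-submodules of `N`.  Inside `N ⊗_R M`, the image
of `(⋂ i, N_i) ⊗_R M` equals the intersection of the images of the canonical maps
`N_i ⊗_R M → N ⊗_R M`. -/
theorem image_inter_tensor_eq_inter_image
    {R M N : Type*} [CommRing R] [AddCommGroup M] [Module R M]
    [AddCommGroup N] [Module R N]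
    (hM : Module.Projective R M) {ι : Type*} (Ni : ι → Submodule R N) :
    LinearMap.range
        (TensorProduct.map (Submodule.subtype (⨅ i, Ni i)) (LinearMap.id : M →ₗ[R] M))
      = ⨅ i, LinearMap.range
          (TensorProduct.map (Submodule.subtype (Ni i)) (LinearMap.id : M →ₗ[R] M)) := by
  classical
  obtain ⟨s, hs⟩ := hM.out
  ext x
  rw [aux_transfer _ s hs, aux_free, Submodule.mem_iInf]
  constructor
  · intro h i
    rw [aux_transfer _ s hs, aux_free]
    intro j
    exact Submodule.mem_iInf _ |>.mp (h j) i
  · intro h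
    intro j
    rw [Submodule.mem_iInf]
    intro i
    have := h i
    rw [aux_transfer _ s hs, aux_free] at this
    exact this j
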